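/- Let μ be a Radon measure on ℝ^d and fix α > 1 and β > α^d. Then for μ-almost every x ∈ ℝ^d there exists a sequence of (α,β)-doubling cubes Q_k centered at x with side lengths ℓ(Q_k) → 0 as k → ∞. -/

import Mathlib

open MeasureTheory Metric Set ENNReal Filter

noncomputable section

/-- Closed axis-parallel cube centered at `c` with side length `l`. -/
def cube {d : ℕ} (c : EuclideanSpace ℝ (Fin d)) (l : ℝ) :
    Set (EuclideanSpace ℝ (Fin d)) := {y | ∀ i, |y i - c i| ≤ l / 2}

lemma closedBall_subset_cube {d : ℕ} (c : EuclideanSpace ℝ (Fin d)) (l : ℝ) :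
    closedBall c (l / 2) ⊆ cube c l := by
  intro y hy i
  have h1 : |y i - c i| = ‖(y - c) i‖ := by simp [Real.norm_eq_abs]
  have h2 : ‖(y - c) i‖ ≤ ‖y - c‖ := by
    rw [EuclideanSpace.norm_eq]
    have : ‖(y - c) i‖ ^ 2 ≤ ∑ j, ‖(y - c) j‖ ^ 2 :=
      Finset.single_le_sum (f := fun j => ‖(y - c) j‖ ^ 2)
        (fun j _ => by positivity) (Finset.mem_univ i)
    calc ‖(y - c) i‖ = Real.sqrt (‖(y - c) i‖ ^ 2) := by
          rw [Real.sqrt_sq (norm_nonneg _)]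
      _ ≤ _ := Real.sqrt_le_sqrt this
  have h3 : ‖y - c‖ ≤ l / 2 := by
    rw [← dist_eq_norm]; exact mem_closedBall.mp hy
  linarith [h1 ▸ h2.trans h3]

lemma cube_subset_closedBall {d : ℕ} (c : EuclideanSpace ℝ (Fin d)) {l : ℝ} (hl : 0 ≤ l) :
    cube c l ⊆ closedBall c (Real.sqrt d * l / 2) := by
  intro y hy
  rw [mem_closedBall, dist_eq_norm, EuclideanSpace.norm_eq]
  have hsum : ∑ j, ‖(y - c) j‖ ^ 2 ≤ (d : ℝ) * (l / 2) ^ 2 := by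
    calc ∑ j, ‖(y - c) j‖ ^ 2 ≤ ∑ _j : Fin d, (l / 2) ^ 2 := by
          apply Finset.sum_le_sum
          intro j _
          have habs : ‖(y - c) j‖ = |y j - c j| := by simp [Real.norm_eq_abs]
          rw [habs]
          exact pow_le_pow_left₀ (abs_nonneg _) (hy j) 2
      _ = (d : ℝ) * (l / 2) ^ 2 := by simp [mul_comm]
  calc Real.sqrt (∑ j, ‖(y - c) j‖ ^ 2) ≤ Real.sqrt ((d : ℝ) * (l / 2) ^ 2) :=
        Real.sqrt_le_sqrt hsum
    _ = Real.sqrt d * (l / 2) := by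
        rw [Real.sqrt_mul (Nat.cast_nonneg d), Real.sqrt_sq (by linarith)]
    _ = Real.sqrt d * l / 2 := by ring

theorem stmt1 {d : ℕ} (μ : Measure (EuclideanSpace ℝ (Fin d))) [Measure.Regular μ]
    (α β : ℝ) (hα : 1 < α) (hβ : α ^ (d : ℝ) < β) :
    ∀ᵐ x ∂μ, ∃ l : ℕ → ℝ, (∀ k, 0 < l k) ∧ Tendsto l atTop (nhds 0) ∧
      ∀ k, μ (cube x (α * l k)) ≤ ENNReal.ofReal β * μ (cube x (l k)) := by
  have hα0 : (0:ℝ) < α := lt_trans one_pos hα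
  have hβα : α ^ d < β := by rwa [← Real.rpow_natCast α d]
  have hβ1 : (1:ℝ) < β := lt_of_le_of_lt (one_le_pow₀ hα.le) hβα
  have hβ0 : (0:ℝ) < β := lt_trans one_pos hβ1
  have key : ∀ᵐ x ∂μ, ∀ ε : ℝ, 0 < ε → ∃ l, 0 < l ∧ l ≤ ε ∧
      μ (cube x (α * l)) ≤ ENNReal.ofReal β * μ (cube x l) := by
    filter_upwards [Besicovitch.ae_tendsto_rnDeriv volume μ,
      Measure.rnDeriv_lt_top volume μ] with x hx hL
    by_contra hcon
    push_neg at hcon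
    obtain ⟨l₀, hl₀, hbad⟩ := hcon
    -- measure of small cubes at x is positive
    have hcubepos : ∀ s : ℝ, 0 < s → s ≤ l₀ → 0 < μ (cube x s) := by
      intro s hs hsl
      have h1 : 0 < s / α := by positivity
      have h2 : s / α ≤ l₀ := by
        rw [div_le_iff₀ hα0]; nlinarith
      have := hbad (s / α) h1 h2
      have heq : α * (s / α) = s := by field_simp
      rw [heq] at this
      exact lt_of_le_of_lt zero_le this
    have hballpos : ∀ r : ℝ, 0 < r → r ≤ l₀ → 0 < μ (closedBall x r) := by
      intro r hr hrl
      have hd : (0:ℝ) ≤ Real.sqrt d := Real.sqrt_nonneg _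
      have hs : (0:ℝ) < r / (Real.sqrt d + 1) := by positivity
      have hsl : r / (Real.sqrt d + 1) ≤ l₀ := by
        have h1 : r / (Real.sqrt d + 1) ≤ r := div_le_self hr.le (by linarith)
        linarith
      refine lt_of_lt_of_le (hcubepos _ hs hsl) (measure_mono ?_)
      refine subset_trans (cube_subset_closedBall x hs.le) (closedBall_subset_closedBall ?_)
      have h1 : Real.sqrt d * (r / (Real.sqrt d + 1)) ≤ r := by
        rw [mul_div_assoc', div_le_iff₀ (by positivity)]
        nlinarith
      have h2 : 0 ≤ Real.sqrt d * (r / (Real.sqrt d + 1)) := by positivity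
      linarith
    -- iteration: measures of shrinking cubes decay geometrically
    set C := μ (cube x l₀) with hC
    have hCfin : C < ∞ := by
      refine lt_of_le_of_lt (measure_mono (cube_subset_closedBall x hl₀.le)) ?_
      exact measure_closedBall_lt_top
    have hβ0' : ENNReal.ofReal β ≠ 0 := by
      simp only [ne_eq, ENNReal.ofReal_eq_zero, not_le]; linarith
    have hβtop : ENNReal.ofReal β ≠ ∞ := ENNReal.ofReal_ne_top
    have iter : ∀ k : ℕ, μ (cube x (l₀ / α ^ k)) ≤ C / (ENNReal.ofReal β) ^ k := by
      intro k
      induction k with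
      | zero => simp [hC]
      | succ k ih =>
        have h1 : (0:ℝ) < l₀ / α ^ (k + 1) := by positivity
        have h2 : l₀ / α ^ (k + 1) ≤ l₀ := div_le_self hl₀.le (one_le_pow₀ hα.le)
        have hb := (hbad _ h1 h2).le
        have heq : α * (l₀ / α ^ (k + 1)) = l₀ / α ^ k := by
          field_simp [pow_succ]; ring
        rw [heq] at hb
        have hble := le_trans hb ih
        have hmul : μ (cube x (l₀ / α ^ (k + 1))) * ENNReal.ofReal β ≤
            C / ENNReal.ofReal β ^ k := by rw [mul_comm]; exact hble
        rw [ENNReal.le_div_iff_mul_le (Or.inl (pow_ne_zero _ hβ0'))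
          (Or.inl (ENNReal.pow_ne_top hβtop))]
        calc μ (cube x (l₀ / α ^ (k + 1))) * ENNReal.ofReal β ^ (k + 1)
            = μ (cube x (l₀ / α ^ (k + 1))) * ENNReal.ofReal β * ENNReal.ofReal β ^ k := by
              rw [pow_succ]; ring
          _ ≤ (C / ENNReal.ofReal β ^ k) * ENNReal.ofReal β ^ k :=
              mul_le_mul_left hmul _
          _ = C := ENNReal.div_mul_cancel (pow_ne_zero _ hβ0') (ENNReal.pow_ne_top hβtop)
    -- the radii sequence
    set r : ℕ → ℝ := fun k => l₀ / α ^ k / 2 with hr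
    have hαk1 : ∀ k : ℕ, (1:ℝ) ≤ α ^ k := fun k => one_le_pow₀ hα.le
    have hrpos : ∀ k, 0 < r k := fun k => by positivity
    have rident : ∀ k, r k = (l₀ / 2) * (α⁻¹) ^ k := by
      intro k
      show l₀ / α ^ k / 2 = (l₀ / 2) * (α⁻¹) ^ k
      rw [inv_pow, div_div, mul_comm (α ^ k) 2, ← div_div, div_eq_mul_inv]
    have hrle : ∀ k, r k ≤ l₀ := by
      intro k
      have h2 : l₀ / α ^ k ≤ l₀ := div_le_self hl₀.le (hαk1 k)
      show l₀ / α ^ k / 2 ≤ l₀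
      linarith
    have hrt : Tendsto r atTop (nhdsWithin 0 (Ioi 0)) := by
      rw [tendsto_nhdsWithin_iff]
      constructor
      · have heq : r = fun k => (l₀ / 2) * (α⁻¹) ^ k := funext rident
        rw [heq]
        have := tendsto_pow_atTop_nhds_zero_of_lt_one (by positivity : (0:ℝ) ≤ α⁻¹)
          (inv_lt_one_of_one_lt₀ hα)
        simpa using this.const_mul (l₀ / 2)
      · exact Eventually.of_forall fun k => hrpos k
    set L := Measure.rnDeriv volume μ x with hLdef
    have hseq : Tendsto (fun k => volume (closedBall x (r k)) / μ (closedBall x (r k)))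
        atTop (nhds L) := hx.comp hrt
    have hLlt : L < L + 1 := ENNReal.lt_add_right hL.ne one_ne_zero
    have hev : ∀ᶠ k in atTop,
        volume (closedBall x (r k)) / μ (closedBall x (r k)) < L + 1 :=
      hseq.eventually_lt_const hLlt
    -- constants
    set c := volume (ball (0 : EuclideanSpace ℝ (Fin d)) 1) with hc
    have hc0 : c ≠ 0 := (measure_ball_pos volume 0 one_pos).ne'
    have hcfin : c ≠ ∞ := measure_ball_lt_top.ne
    have hvol : ∀ k, volume (closedBall x (r k)) = ENNReal.ofReal ((r k) ^ d) * c := by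
      intro k
      rw [Measure.addHaar_closedBall volume x (hrpos k).le]
      rw [finrank_euclideanSpace_fin]
    -- real-valued contradiction
    set M := ((L + 1) * C).toReal with hM
    have hreal : ∀ᶠ k in atTop, (r k) ^ d * c.toReal ≤ M / β ^ k := by
      filter_upwards [hev] with k hk
      have hμne : μ (closedBall x (r k)) ≠ 0 := (hballpos _ (hrpos k) (hrle k)).ne'
      have hμfin : μ (closedBall x (r k)) ≠ ∞ := measure_closedBall_lt_top.ne
      have h1 : volume (closedBall x (r k)) ≤ (L + 1) * μ (closedBall x (r k)) := by
        rw [ENNReal.div_lt_iff (Or.inl hμne) (Or.inl hμfin)] at hk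
        exact hk.le
      have h2 : μ (closedBall x (r k)) ≤ C / (ENNReal.ofReal β) ^ k := by
        refine le_trans (measure_mono ?_) (iter k)
        exact closedBall_subset_cube x _
      have h3 : volume (closedBall x (r k)) ≤ ((L + 1) * C) / (ENNReal.ofReal β) ^ k := by
        calc volume (closedBall x (r k)) ≤ (L + 1) * μ (closedBall x (r k)) := h1
          _ ≤ (L + 1) * (C / (ENNReal.ofReal β) ^ k) := mul_le_mul_right h2 _
          _ = ((L + 1) * C) / (ENNReal.ofReal β) ^ k := by rw [mul_div_assoc]
      have hfin : ((L + 1) * C) / (ENNReal.ofReal β) ^ k ≠ ∞ := by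
        refine (ENNReal.div_lt_top ?_ (pow_ne_zero _ hβ0')).ne
        exact ENNReal.mul_ne_top (ENNReal.add_ne_top.mpr ⟨hL.ne, ENNReal.one_ne_top⟩) hCfin.ne
      have h4 := ENNReal.toReal_mono hfin h3
      rw [hvol k] at h4
      rw [ENNReal.toReal_mul, ENNReal.toReal_ofReal (by positivity)] at h4
      rw [ENNReal.toReal_div, ← hM] at h4
      rwa [ENNReal.toReal_pow, ENNReal.toReal_ofReal hβ0.le] at h4
    have hcpos : 0 < c.toReal := ENNReal.toReal_pos hc0 hcfin
    have hconst : ∀ k, (r k) ^ d * c.toReal = ((l₀ / 2) ^ d * c.toReal) * ((α ^ d)⁻¹) ^ k := by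
      intro k
      rw [rident k, mul_pow, ← inv_pow, ← pow_mul, ← pow_mul, mul_comm d k, pow_mul, inv_pow]
      ring
    have hreal2 : ∀ᶠ k in atTop, (l₀ / 2) ^ d * c.toReal ≤ M * (α ^ d / β) ^ k := by
      filter_upwards [hreal] with k hk
      rw [hconst k] at hk
      have hαd : (0:ℝ) < α ^ d := by positivity
      have h5 : (l₀ / 2) ^ d * c.toReal ≤ (M / β ^ k) * (α ^ d) ^ k := by
        have := mul_le_mul_of_nonneg_right hk (le_of_lt (pow_pos hαd k))
        rwa [mul_assoc, ← mul_pow, inv_mul_cancel₀ hαd.ne', one_pow, mul_one] at this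
      calc (l₀ / 2) ^ d * c.toReal ≤ (M / β ^ k) * (α ^ d) ^ k := h5
        _ = M * (α ^ d / β) ^ k := by rw [div_pow]; ring
    have hlim : Tendsto (fun k : ℕ => M * (α ^ d / β) ^ k) atTop (nhds 0) := by
      have hq0 : (0:ℝ) ≤ α ^ d / β := by positivity
      have hq1 : α ^ d / β < 1 := (div_lt_one hβ0).mpr hβα
      have := tendsto_pow_atTop_nhds_zero_of_lt_one hq0 hq1
      simpa using this.const_mul M
    have hposconst : 0 < (l₀ / 2) ^ d * c.toReal := by positivity
    have hev2 : ∀ᶠ k in atTop, M * (α ^ d / β) ^ k < (l₀ / 2) ^ d * c.toReal :=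
      hlim.eventually_lt_const hposconst
    obtain ⟨k, h1, h2⟩ := (hreal2.and hev2).exists
    linarith
  filter_upwards [key] with x hx
  choose l hl0 hle hdb using fun k : ℕ => hx (1 / (k + 1)) (by positivity)
  refine ⟨l, hl0, ?_, hdb⟩
  refine squeeze_zero (fun k => (hl0 k).le) hle ?_
  exact tendsto_one_div_add_atTop_nhds_zero_nat
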